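/- arXiv:2106.15414 — 2 statements merged into one kernel-verified Lean document; each statement's English description precedes it below -/
import Mathlib

section
/- Two permutations σ, τ ∈ S_{2n} lie in the same double coset of B_n\S_{2n}/B_n if and only if they have the same coset-type. -/
/-- Cycle type including fixed points. For matchings `δ₁,δ₂` (fixed-point-free
involutions), `Λ(δ₁,δ₂) = λ` iff `fullCycleType (δ₁ * δ₂) = λ + λ`; in particular
the coset-type of `σ` is determined by `fullCycleType (ε * (σ·ε))`. -/
def fullCycleType {α : Type*} [Fintype α] [DecidableEq α] (f : Equiv.Perm α) : Multiset ℕ :=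
  f.cycleType + Multiset.replicate (Fintype.card α - f.cycleType.sum) 1

/-- The matching `ε = {{1,1̂},…,{n,n̂}}` on `A_n = Fin n ⊕ Fin n`. -/
def epsilonPerm (n : ℕ) : Equiv.Perm (Fin n ⊕ Fin n) := Equiv.sumComm (Fin n) (Fin n)

namespace DCaux

open Equiv Equiv.Perm

variable {α : Type*}

lemma semiconj {p e : Equiv.Perm α} (hpe : ∀ x, p (e (p x)) = e x) :
    ∀ (k : ℤ) (x : α), e ((p ^ k) x) = (p ^ (-k)) (e x) := by
  have h1 : SemiconjBy e p p⁻¹ := by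
    show e * p = p⁻¹ * e
    ext x
    simp only [Equiv.Perm.mul_apply]
    rw [← hpe x]
    simp
  intro k x
  have h2 := (h1.zpow_right k)
  have h3 : e * p ^ k = p ^ (-k) * e := by
    rw [zpow_neg, ← inv_zpow]; exact h2
  calc e ((p ^ k) x) = (e * p ^ k) x := rfl
    _ = (p ^ (-k) * e) x := by rw [h3]
    _ = (p ^ (-k)) (e x) := rfl

lemma sameCycle_conj {p e : Equiv.Perm α} (hpe : ∀ x, p (e (p x)) = e x)
    {x y : α} (h : p.SameCycle x y) : p.SameCycle (e x) (e y) := by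
  obtain ⟨k, hk⟩ := h
  exact ⟨-k, by rw [← hk, ← semiconj hpe]⟩

lemma not_sameCycle_e {p e : Equiv.Perm α} (hpe : ∀ x, p (e (p x)) = e x)
    (hef : ∀ x, e x ≠ x) (hepf : ∀ x, e (p x) ≠ x) : ∀ x, ¬ p.SameCycle x (e x) := by
  rintro x ⟨k, hk⟩
  rcases Int.even_or_odd k with ⟨j, hj⟩ | ⟨j, hj⟩
  · apply hef ((p ^ j) x)
    have h2 : (p ^ (-j)) ((p ^ k) x) = (p ^ (-j + k)) x := by
      rw [← Equiv.Perm.mul_apply, ← zpow_add]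
    have h1 : e ((p ^ j) x) = (p ^ (-j)) (e x) := semiconj hpe j x
    rw [← hk, h2] at h1
    have h3 : -j + k = j := by omega
    rw [h3] at h1
    exact h1
  · apply hepf ((p ^ j) x)
    have hp1 : p ((p ^ j) x) = (p ^ (j + 1)) x := by
      rw [← Equiv.Perm.mul_apply, ← zpow_one_add, add_comm]
    rw [hp1]
    have h2 : (p ^ (-(j + 1))) ((p ^ k) x) = (p ^ (-(j + 1) + k)) x := by
      rw [← Equiv.Perm.mul_apply, ← zpow_add]
    have h1 : e ((p ^ (j + 1)) x) = (p ^ (-(j + 1))) (e x) := semiconj hpe (j + 1) x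
    rw [← hk, h2] at h1
    have h3 : -(j + 1) + k = j := by omega
    rw [h3] at h1
    exact h1

lemma keyB : ∀ (N : ℕ) (α : Type) (_ : Fintype α) (_ : DecidableEq α),
    Fintype.card α ≤ N → ∀ (p e e' : Equiv.Perm α),
    (∀ x, e (e x) = x) → (∀ x, e' (e' x) = x) →
    (∀ x, p (e (p x)) = e x) → (∀ x, p (e' (p x)) = e' x) →
    (∀ x, e x ≠ x) → (∀ x, e' x ≠ x) →
    (∀ x, e (p x) ≠ x) → (∀ x, e' (p x) ≠ x) →
    ∃ z : Equiv.Perm α, (∀ x, z (p x) = p (z x)) ∧ (∀ x, z (e x) = e' (z x)) := by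
  intro N
  induction N with
  | zero =>
    intro α _ _ hcard p e e' _ _ _ _ _ _ _ _
    have : IsEmpty α := Fintype.card_eq_zero_iff.mp (Nat.le_zero.mp hcard)
    exact ⟨1, fun x => isEmptyElim x, fun x => isEmptyElim x⟩
  | succ n IH =>
    intro α instF instD hcard p e e' he he' hpe hpe' hef he'f hepf he'pf
    classical
    rcases isEmpty_or_nonempty α with hα | hα
    · exact ⟨1, fun x => isEmptyElim x, fun x => isEmptyElim x⟩
    obtain ⟨a⟩ := hα
    -- basic pointwise consequences
    have hep : ∀ x, e (p x) = p⁻¹ (e x) := by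
      intro x; rw [← hpe x]; simp
    have he'p : ∀ x, e' (p x) = p⁻¹ (e' x) := by
      intro x; rw [← hpe' x]; simp
    have hepinv : ∀ x, e (p⁻¹ x) = p (e x) := by
      intro x
      have h := hpe (p⁻¹ x)
      rw [(id (Equiv.apply_symm_apply p _) : p (p⁻¹ _) = _)] at h
      exact h.symm
    have he'pinv : ∀ x, e' (p⁻¹ x) = p (e' x) := by
      intro x
      have h := hpe' (p⁻¹ x)
      rw [(id (Equiv.apply_symm_apply p _) : p (p⁻¹ _) = _)] at h
      exact h.symm
    have hK2 : ∀ x, ¬ p.SameCycle x (e x) := not_sameCycle_e hpe hef hepf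
    have hK2' : ∀ x, ¬ p.SameCycle x (e' x) := not_sameCycle_e hpe' he'f he'pf
    have hconj : ∀ x y, p.SameCycle x y → p.SameCycle (e x) (e y) :=
      fun _ _ h => sameCycle_conj hpe h
    have hconj' : ∀ x y, p.SameCycle x y → p.SameCycle (e' x) (e' y) :=
      fun _ _ h => sameCycle_conj hpe' h
    have hCD : ∀ x, p.SameCycle a x → ¬ p.SameCycle (e a) x :=
      fun x h1 h2 => hK2 a (h1.trans h2.symm)
    have hCD' : ∀ x, p.SameCycle a x → ¬ p.SameCycle (e' a) x :=
      fun x h1 h2 => hK2' a (h1.trans h2.symm)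
    have hDtoC : ∀ x, p.SameCycle (e a) x → p.SameCycle a (e x) := by
      intro x h
      have h2 := hconj _ _ h
      rwa [he a] at h2
    have hD'toC : ∀ x, p.SameCycle (e' a) x → p.SameCycle a (e' x) := by
      intro x h
      have h2 := hconj' _ _ h
      rwa [he' a] at h2
    -- construction of w
    have hw : ∃ w : Equiv.Perm α, (∀ x, w (p x) = p (w x)) ∧
        (∀ x, p.SameCycle a x → w⁻¹ (e' (w x)) = e x) := by
      by_cases hDD' : p.SameCycle (e a) (e' a)
      · -- the cycle of e' a equals the cycle of e a
        refine ⟨⟨fun x => if p.SameCycle (e a) x then e' (e x) else x,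
                 fun x => if p.SameCycle (e a) x then e (e' x) else x, ?_, ?_⟩, ?_, ?_⟩
        · intro x
          dsimp only
          by_cases hx : p.SameCycle (e a) x
          · rw [if_pos hx, if_pos (hDD'.trans (hconj' _ _ (hDtoC x hx))), he', he]
          · rw [if_neg hx, if_neg hx]
        · intro x
          dsimp only
          by_cases hx : p.SameCycle (e a) x
          · have h1 : p.SameCycle a (e' x) := hD'toC x (hDD'.symm.trans hx)
            rw [if_pos hx, if_pos (hconj _ _ h1), he, he']
          · rw [if_neg hx, if_neg hx]
        · intro x
          simp only [Equiv.coe_fn_mk]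
          by_cases hx : p.SameCycle (e a) x
          · rw [if_pos hx, if_pos (Equiv.Perm.sameCycle_apply_right.mpr hx), hep x, he'pinv]
          · rw [if_neg hx, if_neg (fun h => hx (Equiv.Perm.sameCycle_apply_right.mp h))]
        · intro x hx
          simp only [Equiv.Perm.inv_def, Equiv.coe_fn_mk, Equiv.coe_fn_symm_mk]
          rw [if_neg (hCD x hx), if_pos (hDD'.trans (hconj' _ _ hx)), he']
      · -- the cycles of e a and e' a are disjoint
        have hDisj : ∀ x, p.SameCycle (e a) x → ¬ p.SameCycle (e' a) x :=
          fun x h1 h2 => hDD' (h1.trans h2.symm)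
        have hinv : Function.Involutive (fun x => if p.SameCycle (e a) x then e' (e x) else
            if p.SameCycle (e' a) x then e (e' x) else x) := by
          intro x
          dsimp only
          by_cases hx : p.SameCycle (e a) x
          · have h1 : p.SameCycle (e' a) (e' (e x)) := hconj' _ _ (hDtoC x hx)
            have h2 : ¬ p.SameCycle (e a) (e' (e x)) := fun h => hDisj _ h h1
            rw [if_pos hx, if_neg h2, if_pos h1, he', he]
          · by_cases hx' : p.SameCycle (e' a) x
            · have h1 : p.SameCycle (e a) (e (e' x)) := hconj _ _ (hD'toC x hx')
              rw [if_neg hx, if_pos hx', if_pos h1, he, he']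
            · rw [if_neg hx, if_neg hx', if_neg hx, if_neg hx']
        refine ⟨hinv.toPerm _, ?_, ?_⟩
        · intro x
          simp only [Function.Involutive.coe_toPerm]
          by_cases hx : p.SameCycle (e a) x
          · rw [if_pos hx, if_pos (Equiv.Perm.sameCycle_apply_right.mpr hx), hep x, he'pinv]
          · by_cases hx' : p.SameCycle (e' a) x
            · rw [if_neg hx, if_neg (fun h => hx (Equiv.Perm.sameCycle_apply_right.mp h)),
                if_pos hx', if_pos (Equiv.Perm.sameCycle_apply_right.mpr hx'), he'p x, hepinv]
            · rw [if_neg hx, if_neg (fun h => hx (Equiv.Perm.sameCycle_apply_right.mp h)),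
                if_neg hx', if_neg (fun h => hx' (Equiv.Perm.sameCycle_apply_right.mp h))]
        · intro x hx
          simp only [Equiv.Perm.inv_def, Function.Involutive.toPerm_symm,
            Function.Involutive.coe_toPerm]
          have h1 : p.SameCycle (e' a) (e' x) := hconj' _ _ hx
          rw [if_neg (hCD x hx), if_neg (hCD' x hx),
            if_neg (fun h => hDisj _ h h1), if_pos h1, he']
    obtain ⟨w, hwp, hwC⟩ := hw
    have hwpinv : ∀ x, w⁻¹ (p x) = p (w⁻¹ x) := by
      intro x
      have h := hwp (w⁻¹ x)
      rw [(id (Equiv.apply_symm_apply w _) : w (w⁻¹ _) = _)] at h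
      rw [← h, (id (Equiv.symm_apply_apply w _) : w⁻¹ (w _) = _)]
    have he''apply : ∀ x, (w⁻¹ * e' * w) x = w⁻¹ (e' (w x)) := fun _ => rfl
    set e'' : Equiv.Perm α := w⁻¹ * e' * w with he''def
    have he''inv : ∀ x, e'' (e'' x) = x := by
      intro x
      rw [he''apply, he''apply, (id (Equiv.apply_symm_apply w _) : w (w⁻¹ _) = _), he', (id (Equiv.symm_apply_apply w _) : w⁻¹ (w _) = _)]
    have hpe'' : ∀ x, p (e'' (p x)) = e'' x := by
      intro x
      rw [he''apply, he''apply, hwp x, ← hwpinv, hpe']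
    have he''f : ∀ x, e'' x ≠ x := by
      intro x h
      apply he'f (w x)
      rw [he''apply] at h
      calc e' (w x) = w (w⁻¹ (e' (w x))) := (Equiv.apply_symm_apply w _).symm
        _ = w x := by rw [h]
    have he''pf : ∀ x, e'' (p x) ≠ x := by
      intro x h
      apply he'pf (w x)
      rw [he''apply, hwp x] at h
      calc e' (p (w x)) = w (w⁻¹ (e' (p (w x)))) := (Equiv.apply_symm_apply w _).symm
        _ = w x := by rw [h]
    have he''S : ∀ x, (p.SameCycle a x ∨ p.SameCycle (e a) x) → e'' x = e x := by
      rintro x (hx | hx)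
      · exact hwC x hx
      · have hy : p.SameCycle a (e x) := hDtoC x hx
        have h1 : e'' (e x) = e (e x) := hwC _ hy
        rw [he x] at h1
        have h3 : e'' (e'' (e x)) = e'' x := by rw [h1]
        rw [he''inv] at h3
        exact h3.symm
    -- the invariant set S and its complement
    have hSp_p : ∀ x, (p.SameCycle a x ∨ p.SameCycle (e a) x) ↔
        (p.SameCycle a (p x) ∨ p.SameCycle (e a) (p x)) := by
      intro x
      rw [Equiv.Perm.sameCycle_apply_right, Equiv.Perm.sameCycle_apply_right]
    have hCa_e : ∀ x, p.SameCycle a (e x) ↔ p.SameCycle (e a) x := by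
      intro x
      constructor
      · intro h
        have h2 := hconj _ _ h
        rwa [he x] at h2
      · exact hDtoC x
    have hDa_e : ∀ x, p.SameCycle (e a) (e x) ↔ p.SameCycle a x := by
      intro x
      constructor
      · intro h
        have h2 := hconj _ _ h
        rwa [he a, he x] at h2
      · exact hconj _ _
    have hSp_e : ∀ x, (p.SameCycle a x ∨ p.SameCycle (e a) x) ↔
        (p.SameCycle a (e x) ∨ p.SameCycle (e a) (e x)) := by
      intro x
      rw [hCa_e, hDa_e]
      exact or_comm
    have hSp_e'' : ∀ x, (p.SameCycle a x ∨ p.SameCycle (e a) x) ↔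
        (p.SameCycle a (e'' x) ∨ p.SameCycle (e a) (e'' x)) := by
      intro x
      constructor
      · intro hx
        rw [he''S x hx]
        exact (hSp_e x).mp hx
      · intro hx
        have h1 : e'' (e'' x) = e (e'' x) := he''S _ hx
        rw [he''inv] at h1
        have h2 : e x = e'' x := by
          conv_lhs => rw [h1, he]
        rw [← h2] at hx
        exact (hSp_e x).mpr hx
    -- pass to the complement subtype
    have hPp : ∀ x, (¬ (p.SameCycle a x ∨ p.SameCycle (e a) x)) ↔
        (¬ (p.SameCycle a (p x) ∨ p.SameCycle (e a) (p x))) := fun x => not_congr (hSp_p x)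
    have hPe : ∀ x, (¬ (p.SameCycle a x ∨ p.SameCycle (e a) x)) ↔
        (¬ (p.SameCycle a (e x) ∨ p.SameCycle (e a) (e x))) := fun x => not_congr (hSp_e x)
    have hPe'' : ∀ x, (¬ (p.SameCycle a x ∨ p.SameCycle (e a) x)) ↔
        (¬ (p.SameCycle a (e'' x) ∨ p.SameCycle (e a) (e'' x))) := fun x => not_congr (hSp_e'' x)
    have hcard2 : Fintype.card {x : α // ¬ (p.SameCycle a x ∨ p.SameCycle (e a) x)} ≤ n := by
      have h1 : Fintype.card {x : α // ¬ (p.SameCycle a x ∨ p.SameCycle (e a) x)}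
          < Fintype.card α :=
        Fintype.card_subtype_lt (x := a) (by simp [Equiv.Perm.SameCycle.refl])
      omega
    obtain ⟨zc, hzp, hze⟩ := IH {x : α // ¬ (p.SameCycle a x ∨ p.SameCycle (e a) x)}
      inferInstance inferInstance hcard2
      (p.subtypePerm (fun x => (hPp x).symm)) (e.subtypePerm (fun x => (hPe x).symm)) (e''.subtypePerm (fun x => (hPe'' x).symm))
      (fun y => Subtype.ext (he y.val)) (fun y => Subtype.ext (he''inv y.val))
      (fun y => Subtype.ext (hpe y.val)) (fun y => Subtype.ext (hpe'' y.val))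
      (fun y h => hef y.val (congrArg Subtype.val h))
      (fun y h => he''f y.val (congrArg Subtype.val h))
      (fun y h => hepf y.val (congrArg Subtype.val h))
      (fun y h => he''pf y.val (congrArg Subtype.val h))
    set zh : Equiv.Perm α := Equiv.Perm.ofSubtype zc with hzhdef
    have hzhp : ∀ x, zh (p x) = p (zh x) := by
      intro x
      by_cases hx : ¬ (p.SameCycle a x ∨ p.SameCycle (e a) x)
      · rw [Equiv.Perm.ofSubtype_apply_of_mem zc ((hPp x).mp hx),
          Equiv.Perm.ofSubtype_apply_of_mem zc hx]
        exact congrArg Subtype.val (hzp ⟨x, hx⟩)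
      · rw [Equiv.Perm.ofSubtype_apply_of_not_mem zc (fun h => hx ((hPp x).mpr h)),
          Equiv.Perm.ofSubtype_apply_of_not_mem zc hx]
    have hzhe : ∀ x, zh (e x) = e'' (zh x) := by
      intro x
      by_cases hx : ¬ (p.SameCycle a x ∨ p.SameCycle (e a) x)
      · rw [Equiv.Perm.ofSubtype_apply_of_mem zc ((hPe x).mp hx),
          Equiv.Perm.ofSubtype_apply_of_mem zc hx]
        exact congrArg Subtype.val (hze ⟨x, hx⟩)
      · rw [Equiv.Perm.ofSubtype_apply_of_not_mem zc (fun h => hx ((hPe x).mpr h)),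
          Equiv.Perm.ofSubtype_apply_of_not_mem zc hx]
        exact (he''S x (not_not.mp hx)).symm
    refine ⟨w * zh, ?_, ?_⟩
    · intro x
      simp only [Equiv.Perm.mul_apply]
      rw [hzhp, hwp]
    · intro x
      simp only [Equiv.Perm.mul_apply]
      rw [hzhe, he''apply, (id (Equiv.apply_symm_apply w _) : w (w⁻¹ _) = _)]

end DCaux

namespace DCaux

lemma eps_mul_self (n : ℕ) : epsilonPerm n * epsilonPerm n = 1 :=
  Equiv.ext fun x => by cases x <;> rfl

lemma eps_fpf (n : ℕ) : ∀ x, epsilonPerm n x ≠ x := by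
  intro x
  cases x <;> simp [epsilonPerm]

lemma fullCycleType_conj {α : Type*} [Fintype α] [DecidableEq α] (g f : Equiv.Perm α) :
    fullCycleType (g * f * g⁻¹) = fullCycleType f := by
  unfold fullCycleType
  rw [Equiv.Perm.cycleType_conj]

lemma cycleType_eq_of_fullCycleType_eq {α : Type*} [Fintype α] [DecidableEq α]
    {f g : Equiv.Perm α} (h : fullCycleType f = fullCycleType g) :
    f.cycleType = g.cycleType := by
  have key : ∀ f : Equiv.Perm α, f.cycleType = (fullCycleType f).filter (fun k => 2 ≤ k) := by
    intro f
    unfold fullCycleType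
    rw [Multiset.filter_add,
      Multiset.filter_eq_self.mpr (fun k hk => Equiv.Perm.two_le_of_mem_cycleType hk),
      Multiset.filter_eq_nil.mpr (fun k hk => by
        rw [Multiset.eq_of_mem_replicate hk]; omega),
      add_zero]
  rw [key f, key g, h]

end DCaux

/-- Two permutations `σ, τ ∈ S_{2n}` lie in the same double coset
`B_n\S_{2n}/B_n` (where `B_n` is the stabilizer of `ε`) iff they have the same
coset-type. -/
theorem double_coset_iff_coset_type (n : ℕ) (σ τ : Equiv.Perm (Fin n ⊕ Fin n)) :
    (∃ b₁ b₂ : Equiv.Perm (Fin n ⊕ Fin n),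
        b₁ * epsilonPerm n * b₁⁻¹ = epsilonPerm n ∧
        b₂ * epsilonPerm n * b₂⁻¹ = epsilonPerm n ∧
        τ = b₁ * σ * b₂)
      ↔ fullCycleType (epsilonPerm n * (σ * epsilonPerm n * σ⁻¹))
          = fullCycleType (epsilonPerm n * (τ * epsilonPerm n * τ⁻¹)) := by
  constructor
  · rintro ⟨b₁, b₂, hb₁, hb₂, rfl⟩
    have e2 : epsilonPerm n * b₁ = b₁ * epsilonPerm n := by
      conv_lhs => rw [← hb₁]
      group
    have e1 : b₁ * σ * b₂ * epsilonPerm n * (b₁ * σ * b₂)⁻¹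
        = b₁ * (σ * (b₂ * epsilonPerm n * b₂⁻¹) * σ⁻¹) * b₁⁻¹ := by group
    have h1 : epsilonPerm n * (b₁ * σ * b₂ * epsilonPerm n * (b₁ * σ * b₂)⁻¹)
        = b₁ * (epsilonPerm n * (σ * epsilonPerm n * σ⁻¹)) * b₁⁻¹ := by
      rw [e1, hb₂]
      calc epsilonPerm n * (b₁ * (σ * epsilonPerm n * σ⁻¹) * b₁⁻¹)
          = (epsilonPerm n * b₁) * ((σ * epsilonPerm n * σ⁻¹) * b₁⁻¹) := by group
        _ = (b₁ * epsilonPerm n) * ((σ * epsilonPerm n * σ⁻¹) * b₁⁻¹) := by rw [e2]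
        _ = b₁ * (epsilonPerm n * (σ * epsilonPerm n * σ⁻¹)) * b₁⁻¹ := by group
    rw [h1, DCaux.fullCycleType_conj]
  · intro hfc
    have hε2 : epsilonPerm n * epsilonPerm n = 1 := DCaux.eps_mul_self n
    have hεf : ∀ x, epsilonPerm n x ≠ x := DCaux.eps_fpf n
    set ε : Equiv.Perm (Fin n ⊕ Fin n) := epsilonPerm n with hεdef
    set p₁ : Equiv.Perm (Fin n ⊕ Fin n) := ε * (σ * ε * σ⁻¹) with hp₁def
    set p₂ : Equiv.Perm (Fin n ⊕ Fin n) := ε * (τ * ε * τ⁻¹) with hp₂def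
    obtain ⟨h, hh⟩ := isConj_iff.mp
      (Equiv.Perm.isConj_iff_cycleType_eq.mpr (DCaux.cycleType_eq_of_fullCycleType_eq hfc))
    -- basic group identities
    have hd1 : ε * p₁ = σ * ε * σ⁻¹ := by
      rw [hp₁def]
      calc ε * (ε * (σ * ε * σ⁻¹)) = (ε * ε) * (σ * ε * σ⁻¹) := by group
        _ = σ * ε * σ⁻¹ := by rw [hε2]; group
    have hd2 : ε * p₂ = τ * ε * τ⁻¹ := by
      rw [hp₂def]
      calc ε * (ε * (τ * ε * τ⁻¹)) = (ε * ε) * (τ * ε * τ⁻¹) := by group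
        _ = τ * ε * τ⁻¹ := by rw [hε2]; group
    have hδ1 : (σ * ε * σ⁻¹) * (σ * ε * σ⁻¹) = 1 := by
      calc (σ * ε * σ⁻¹) * (σ * ε * σ⁻¹) = σ * (ε * ε) * σ⁻¹ := by group
        _ = 1 := by rw [hε2]; group
    have hδ2 : (τ * ε * τ⁻¹) * (τ * ε * τ⁻¹) = 1 := by
      calc (τ * ε * τ⁻¹) * (τ * ε * τ⁻¹) = τ * (ε * ε) * τ⁻¹ := by group
        _ = 1 := by rw [hε2]; group
    have hg1 : p₁ * ε * p₁ = ε := by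
      calc p₁ * ε * p₁ = (ε * (σ * ε * σ⁻¹)) * ε * (ε * (σ * ε * σ⁻¹)) := by rw [hp₁def]
        _ = ε * ((σ * ε * σ⁻¹) * (ε * ε) * (σ * ε * σ⁻¹)) := by group
        _ = ε * ((σ * ε * σ⁻¹) * (σ * ε * σ⁻¹)) := by rw [hε2]; group
        _ = ε := by rw [hδ1]; group
    have hg2 : p₂ * ε * p₂ = ε := by
      calc p₂ * ε * p₂ = (ε * (τ * ε * τ⁻¹)) * ε * (ε * (τ * ε * τ⁻¹)) := by rw [hp₂def]
        _ = ε * ((τ * ε * τ⁻¹) * (ε * ε) * (τ * ε * τ⁻¹)) := by group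
        _ = ε * ((τ * ε * τ⁻¹) * (τ * ε * τ⁻¹)) := by rw [hε2]; group
        _ = ε := by rw [hδ2]; group
    have hp₁h : p₁ = h⁻¹ * p₂ * h := by rw [← hh]; group
    have he'g : p₁ * (h⁻¹ * ε * h) * p₁ = h⁻¹ * ε * h := by
      calc p₁ * (h⁻¹ * ε * h) * p₁ = h⁻¹ * (p₂ * ε * p₂) * h := by rw [hp₁h]; group
        _ = h⁻¹ * ε * h := by rw [hg2]
    have he'2 : (h⁻¹ * ε * h) * (h⁻¹ * ε * h) = 1 := by
      calc (h⁻¹ * ε * h) * (h⁻¹ * ε * h) = h⁻¹ * (ε * ε) * h := by group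
        _ = 1 := by rw [hε2]; group
    -- fixed-point-freeness facts
    have hδ1f : ∀ x, (σ * ε * σ⁻¹) x ≠ x := by
      intro x hx
      apply hεf (σ⁻¹ x)
      have h2 : σ⁻¹ ((σ * ε * σ⁻¹) x) = σ⁻¹ x := by rw [hx]
      simpa using h2
    have hδ2f : ∀ x, (τ * ε * τ⁻¹) x ≠ x := by
      intro x hx
      apply hεf (τ⁻¹ x)
      have h2 : τ⁻¹ ((τ * ε * τ⁻¹) x) = τ⁻¹ x := by rw [hx]
      simpa using h2
    have he'f : ∀ x, (h⁻¹ * ε * h) x ≠ x := by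
      intro x hx
      apply hεf (h x)
      have h2 : h ((h⁻¹ * ε * h) x) = h x := by rw [hx]
      simpa using h2
    have hεp₁ : ∀ x, ε (p₁ x) = (σ * ε * σ⁻¹) x := by
      intro x
      calc ε (p₁ x) = (ε * p₁) x := rfl
        _ = (σ * ε * σ⁻¹) x := by rw [hd1]
    have he'p₁eq : (h⁻¹ * ε * h) * p₁ = h⁻¹ * (τ * ε * τ⁻¹) * h := by
      calc (h⁻¹ * ε * h) * p₁ = h⁻¹ * (ε * p₂) * h := by rw [hp₁h]; group
        _ = h⁻¹ * (τ * ε * τ⁻¹) * h := by rw [hd2]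
    have he'p₁f : ∀ x, (h⁻¹ * ε * h) (p₁ x) ≠ x := by
      intro x hx
      apply hδ2f (h x)
      have h1 : ((h⁻¹ * ε * h) * p₁) x = x := hx
      rw [he'p₁eq] at h1
      have h2 : h ((h⁻¹ * (τ * ε * τ⁻¹) * h) x) = h x := by rw [h1]
      simpa using h2
    -- apply the key lemma
    obtain ⟨z, hzp, hze⟩ := DCaux.keyB (Fintype.card (Fin n ⊕ Fin n)) (Fin n ⊕ Fin n)
      inferInstance inferInstance le_rfl p₁ ε (h⁻¹ * ε * h)
      (fun x => by
        calc ε (ε x) = (ε * ε) x := rfl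
          _ = x := by rw [hε2]; rfl)
      (fun x => by
        calc (h⁻¹ * ε * h) ((h⁻¹ * ε * h) x) = ((h⁻¹ * ε * h) * (h⁻¹ * ε * h)) x := rfl
          _ = x := by rw [he'2]; rfl)
      (fun x => by
        calc p₁ (ε (p₁ x)) = (p₁ * ε * p₁) x := rfl
          _ = ε x := by rw [hg1])
      (fun x => by
        calc p₁ ((h⁻¹ * ε * h) (p₁ x)) = (p₁ * (h⁻¹ * ε * h) * p₁) x := rfl
          _ = (h⁻¹ * ε * h) x := by rw [he'g])
      hεf he'f
      (fun x hx => hδ1f x (by rw [← hεp₁ x]; exact hx))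
      he'p₁f
    have hz_p : z * p₁ * z⁻¹ = p₁ := by
      have h1 : z * p₁ = p₁ * z := Equiv.ext fun x => hzp x
      rw [h1]; group
    have hz_e : z * ε * z⁻¹ = h⁻¹ * ε * h := by
      have h1 : z * ε = (h⁻¹ * ε * h) * z := Equiv.ext fun x => hze x
      rw [h1]; group
    refine ⟨h * z, σ⁻¹ * (h * z)⁻¹ * τ, ?_, ?_, ?_⟩
    · calc h * z * ε * (h * z)⁻¹ = h * (z * ε * z⁻¹) * h⁻¹ := by group
        _ = h * (h⁻¹ * ε * h) * h⁻¹ := by rw [hz_e]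
        _ = ε := by group
    · have hgp : (h * z) * p₁ * (h * z)⁻¹ = p₂ := by
        calc (h * z) * p₁ * (h * z)⁻¹ = h * (z * p₁ * z⁻¹) * h⁻¹ := by group
          _ = h * p₁ * h⁻¹ := by rw [hz_p]
          _ = p₂ := hh
      have hgd : (h * z) * (σ * ε * σ⁻¹) * (h * z)⁻¹ = τ * ε * τ⁻¹ := by
        have hge : (h * z) * ε * (h * z)⁻¹ = ε := by
          calc h * z * ε * (h * z)⁻¹ = h * (z * ε * z⁻¹) * h⁻¹ := by group
            _ = h * (h⁻¹ * ε * h) * h⁻¹ := by rw [hz_e]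
            _ = ε := by group
        calc (h * z) * (σ * ε * σ⁻¹) * (h * z)⁻¹
            = (h * z) * (ε * p₁) * (h * z)⁻¹ := by rw [hd1]
          _ = ((h * z) * ε * (h * z)⁻¹) * ((h * z) * p₁ * (h * z)⁻¹) := by group
          _ = ε * p₂ := by rw [hge, hgp]
          _ = τ * ε * τ⁻¹ := hd2
      have h5 : (h * z)⁻¹ * (τ * ε * τ⁻¹) * (h * z) = σ * ε * σ⁻¹ := by
        rw [← hgd]; group
      calc (σ⁻¹ * (h * z)⁻¹ * τ) * ε * (σ⁻¹ * (h * z)⁻¹ * τ)⁻¹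
          = σ⁻¹ * ((h * z)⁻¹ * (τ * ε * τ⁻¹) * (h * z)) * σ := by group
        _ = σ⁻¹ * (σ * ε * σ⁻¹) * σ := by rw [h5]
        _ = ε := by group
    · group
end

section
/- For a rectangular partition λ = (q × r), i.e. q parts all equal to r, one has (−1)^{|λ|} · J_λ^{(α)}(q̲) · J_λ^{(α)}(−αr̲) / j_λ^{(α)} = 1, where J_λ^{(α)}(u̲) denotes the evaluation of J_λ^{(α)} with every power-sum p_i set to u, and j_λ^{(α)} = ⟨J_λ, J_λ⟩_α. -/
/-- For the rectangular partition `λ = (q × r)` (with `q` parts equal to `r`)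
one has `(−1)^{|λ|} J_λ^{(α)}(q̲) · J_λ^{(α)}(−αr̲) / j_λ^{(α)} = 1`, where
`J_λ^{(α)}(u̲) = ∏_{□∈λ} (u + c_α(□))` with `c_α((i,j)) = α(j−1)−(i−1)` and
`j_λ^{(α)} = ∏_{□∈λ} (α a(□)+ℓ(□)+1) · ∏_{□∈λ} (α(a(□)+1)+ℓ(□))`; for the
rectangle the box in (0-indexed) row `i`, column `j` has arm `r−1−j` and leg
`q−1−i`.  Stated in cross-multiplied form. -/
theorem jack_rectangular_evaluation {K : Type*} [Field K] [CharZero K]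
    (α : K) (q r : ℕ) (hq : 0 < q) (hr : 0 < r) :
    (-1 : K) ^ (q * r)
        * (∏ i ∈ Finset.range q, ∏ j ∈ Finset.range r,
            ((q : K) + (α * (j : K) - (i : K))))
        * (∏ i ∈ Finset.range q, ∏ j ∈ Finset.range r,
            (-(α * (r : K)) + (α * (j : K) - (i : K))))
      = (∏ i ∈ Finset.range q, ∏ j ∈ Finset.range r,
            (α * ((r - 1 - j : ℕ) : K) + ((q - 1 - i : ℕ) : K) + 1))
        * (∏ i ∈ Finset.range q, ∏ j ∈ Finset.range r,
            (α * (((r - 1 - j : ℕ) : K) + 1) + ((q - 1 - i : ℕ) : K))) := by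
  have castq : ∀ i ∈ Finset.range q, ((q - 1 - i : ℕ) : K) = (q : K) - 1 - (i : K) := by
    intro i hi
    simp only [Finset.mem_range] at hi
    have h1 : i ≤ q - 1 := by omega
    have h2 : 1 ≤ q := hq
    push_cast [Nat.cast_sub h1, Nat.cast_sub h2]
    ring
  have castr : ∀ j ∈ Finset.range r, ((r - 1 - j : ℕ) : K) = (r : K) - 1 - (j : K) := by
    intro j hj
    simp only [Finset.mem_range] at hj
    have h1 : j ≤ r - 1 := by omega
    have h2 : 1 ≤ r := hr
    push_cast [Nat.cast_sub h1, Nat.cast_sub h2]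
    ring
  -- First LHS product equals ∏ (α*j + i + 1)
  have h1 : (∏ i ∈ Finset.range q, ∏ j ∈ Finset.range r,
      ((q : K) + (α * (j : K) - (i : K))))
      = ∏ i ∈ Finset.range q, ∏ j ∈ Finset.range r,
          (α * (j : K) + (i : K) + 1) := by
    rw [← Finset.prod_range_reflect (fun i => ∏ j ∈ Finset.range r,
        (α * (j : K) + (i : K) + 1)) q]
    refine Finset.prod_congr rfl fun i hi => Finset.prod_congr rfl fun j hj => ?_
    rw [castq i hi]
    ring
  -- Second LHS product equals (-1)^(q*r) * ∏ (α*(j+1) + i)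
  have h2 : (∏ i ∈ Finset.range q, ∏ j ∈ Finset.range r,
      (-(α * (r : K)) + (α * (j : K) - (i : K))))
      = (-1 : K) ^ (q * r) * ∏ i ∈ Finset.range q, ∏ j ∈ Finset.range r,
          (α * ((j : K) + 1) + (i : K)) := by
    have : ∀ i ∈ Finset.range q, (∏ j ∈ Finset.range r,
        (-(α * (r : K)) + (α * (j : K) - (i : K))))
        = (-1 : K) ^ r * ∏ j ∈ Finset.range r, (α * ((j : K) + 1) + (i : K)) := by
      intro i hi
      rw [← Finset.prod_range_reflect (fun j =>
          (-(α * (r : K)) + (α * (j : K) - (i : K)))) r]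
      have : ∀ j ∈ Finset.range r,
          (-(α * (r : K)) + (α * ((r - 1 - j : ℕ) : K) - (i : K)))
          = (-1) * (α * ((j : K) + 1) + (i : K)) := by
        intro j hj
        rw [castr j hj]
        ring
      rw [Finset.prod_congr rfl this, Finset.prod_mul_distrib,
        Finset.prod_const, Finset.card_range]
    rw [Finset.prod_congr rfl this, Finset.prod_mul_distrib,
      Finset.prod_const, Finset.card_range, ← pow_mul, mul_comm r q]
  -- First RHS product
  have h3 : (∏ i ∈ Finset.range q, ∏ j ∈ Finset.range r,
      (α * ((r - 1 - j : ℕ) : K) + ((q - 1 - i : ℕ) : K) + 1))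
      = ∏ i ∈ Finset.range q, ∏ j ∈ Finset.range r,
          (α * (j : K) + (i : K) + 1) := by
    rw [← Finset.prod_range_reflect (fun i => ∏ j ∈ Finset.range r,
        (α * (j : K) + (i : K) + 1)) q]
    refine Finset.prod_congr rfl fun i hi => ?_
    rw [← Finset.prod_range_reflect (fun j =>
        (α * (j : K) + (((q - 1 - i : ℕ) : K)) + 1)) r]
  -- Second RHS product
  have h4 : (∏ i ∈ Finset.range q, ∏ j ∈ Finset.range r,
      (α * (((r - 1 - j : ℕ) : K) + 1) + ((q - 1 - i : ℕ) : K)))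
      = ∏ i ∈ Finset.range q, ∏ j ∈ Finset.range r,
          (α * ((j : K) + 1) + (i : K)) := by
    rw [← Finset.prod_range_reflect (fun i => ∏ j ∈ Finset.range r,
        (α * ((j : K) + 1) + (i : K))) q]
    refine Finset.prod_congr rfl fun i hi => ?_
    rw [← Finset.prod_range_reflect (fun j =>
        (α * ((j : K) + 1) + (((q - 1 - i : ℕ) : K)))) r]
  rw [h1, h2, h3, h4, mul_mul_mul_comm, ← mul_pow]
  norm_num
end
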